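/- Let 0<p<q, p+q=1, θ=√(1+4pq). Given π_0 = (q−p)(3−2p−θ)/(2q⁴) and π_1 = (q−p)(−1−p−2pq+(1+p)θ)/q⁵, define N(z) = {p³(4−3p+pz)π_0 + [−1+6p²−8p³+3p⁴+(4−3p)p³z+p⁴z²]π_1}z² and D(z) = (q²−p²z)(q²+(1+2pq)z+p²z²). Then with z₂ = q²/p², the formula A(p) = −N(z₂)/(z₂D′(z₂)) evaluates to (q−p)[1+(q−p)θ]/(4q⁴). -/

import Mathlib

set_option maxHeartbeats 1000000 in
/-- Singularity analysis for the `ℓ = 2` traffic light subwalk: with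
`N`, `D` the numerator and denominator of the stationary generating function
and `z₂ = q²/p²` the dominant singularity, the coefficient
`A(p) = −N(z₂)/(z₂·D′(z₂))` equals `(q−p)[1+(q−p)θ]/(4q⁴)`. -/
theorem stmt_18 (p q : ℝ) (hp : 0 < p) (hpq : p < q) (hsum : p + q = 1)
    (θ : ℝ) (hθ : θ = Real.sqrt (1 + 4 * p * q))
    (π₀ π₁ : ℝ)
    (hπ₀ : π₀ = (q - p) * (3 - 2 * p - θ) / (2 * q ^ 4))
    (hπ₁ : π₁ = (q - p) * (-1 - p - 2 * p * q + (1 + p) * θ) / q ^ 5)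
    (N D : ℝ → ℝ)
    (hN : ∀ z, N z = (p ^ 3 * (4 - 3 * p + p * z) * π₀
      + (-1 + 6 * p ^ 2 - 8 * p ^ 3 + 3 * p ^ 4 + (4 - 3 * p) * p ^ 3 * z
        + p ^ 4 * z ^ 2) * π₁) * z ^ 2)
    (hD : ∀ z, D z = (q ^ 2 - p ^ 2 * z)
      * (q ^ 2 + (1 + 2 * p * q) * z + p ^ 2 * z ^ 2))
    (z₂ : ℝ) (hz₂ : z₂ = q ^ 2 / p ^ 2) :
    -N z₂ / (z₂ * deriv D z₂) = (q - p) * (1 + (q - p) * θ) / (4 * q ^ 4) := by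
  have hp0 : p ≠ 0 := ne_of_gt hp
  have hq0 : q ≠ 0 := by nlinarith
  have hDeq : D = fun z => (q ^ 2 - p ^ 2 * z)
      * (q ^ 2 + (1 + 2 * p * q) * z + p ^ 2 * z ^ 2) := funext hD
  have h1 : HasDerivAt (fun z : ℝ => q ^ 2 - p ^ 2 * z) (-p ^ 2) z₂ := by
    simpa using ((hasDerivAt_id z₂).const_mul (p ^ 2)).const_sub (q ^ 2)
  have h2 : HasDerivAt (fun z : ℝ => q ^ 2 + (1 + 2 * p * q) * z + p ^ 2 * z ^ 2)
      ((1 + 2 * p * q) + p ^ 2 * (2 * z₂)) z₂ := by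
    have ha : HasDerivAt (fun z : ℝ => (1 + 2 * p * q) * z) (1 + 2 * p * q) z₂ := by
      simpa using ((hasDerivAt_id z₂).const_mul (1 + 2 * p * q))
    have hb : HasDerivAt (fun z : ℝ => p ^ 2 * z ^ 2) (p ^ 2 * (2 * z₂)) z₂ := by
      simpa using ((hasDerivAt_pow 2 z₂).const_mul (p ^ 2))
    exact (ha.const_add (q ^ 2)).add hb
  have hD' : deriv D z₂ = (-p ^ 2) * (q ^ 2 + (1 + 2 * p * q) * z₂ + p ^ 2 * z₂ ^ 2)
      + (q ^ 2 - p ^ 2 * z₂) * ((1 + 2 * p * q) + p ^ 2 * (2 * z₂)) := by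
    rw [hDeq]; exact (h1.mul h2).deriv
  have hq1 : q = 1 - p := by linarith
  subst hq1
  have h1p : (1 : ℝ) - p ≠ 0 := hq0
  have hden : z₂ * deriv D z₂ = -2 * (1 - p) ^ 4 / p ^ 2 := by
    rw [hD', hz₂]
    field_simp
    ring
  rw [hden, hN, hz₂, hπ₀, hπ₁]
  field_simp
  ring
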